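/- arXiv:math/0510374 — 3 statements merged into one kernel-verified Lean document; each statement's English description precedes it below -/
import Mathlib

section
/- Let S be an abelian Sylow p-subgroup of a finite group G, let P, Q ≤ S be subgroups, and let g ∈ G satisfy gPg⁻¹ ≤ Q. Then there exists n ∈ N_G(S) such that nxn⁻¹ = gxg⁻¹ for all x ∈ P. In particular, conjugation maps between subgroups of S induced by G are restrictions of automorphisms of S induced by N_G(S). -/
open Subgroup MulAction

theorem stmt_8 (p : ℕ) [Fact p.Prime] (G : Type) [Group G] [Finite G]
    (S : Sylow p G) (hab : ∀ a ∈ (S : Subgroup G), ∀ b ∈ (S : Subgroup G), a * b = b * a)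
    (P Q : Subgroup G) (hP : P ≤ (S : Subgroup G)) (hQ : Q ≤ (S : Subgroup G))
    (g : G) (hg : ∀ x ∈ P, g * x * g⁻¹ ∈ Q) :
    ∃ n ∈ Subgroup.normalizer ((S : Subgroup G) : Set G), ∀ x ∈ P, n * x * n⁻¹ = g * x * g⁻¹ := by
  set s : Set G := (fun x => g * x * g⁻¹) '' (P : Set G) with hs
  have h1 : (S : Subgroup G) ≤ centralizer s := by
    intro c hc
    rintro - ⟨x, hx, rfl⟩
    exact hab _ (hQ (hg x hx)) c hc
  have h2 : ((g • S : Sylow p G) : Subgroup G) ≤ centralizer s := by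
    rintro - ⟨t, ht, rfl⟩
    rintro - ⟨x, hx, rfl⟩
    have ht' : t ∈ (S : Subgroup G) := ht
    have := hab x (hP hx) t ht'
    have e : ∀ a b : G, (g * a * g⁻¹) * (g * b * g⁻¹) = g * (a * b) * g⁻¹ := by
      intro a b; group
    show (g * x * g⁻¹) * (g * t * g⁻¹) = (g * t * g⁻¹) * (g * x * g⁻¹)
    rw [e, e, this]
  obtain ⟨h, hh⟩ :=
    exists_smul_eq (centralizer s) ((g • S).subtype h2) (S.subtype h1)
  simp_rw [Sylow.smul_subtype, Subgroup.smul_def, smul_smul] at hh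
  refine ⟨(h : G) * g, Sylow.smul_eq_iff_mem_normalizer.mp (Sylow.subtype_injective hh), ?_⟩
  intro x hx
  have hc : (h : G) * (g * x * g⁻¹) = (g * x * g⁻¹) * (h : G) :=
    (h.prop (g * x * g⁻¹) ⟨x, hx, rfl⟩).symm
  calc ((h : G) * g) * x * ((h : G) * g)⁻¹
      = (h : G) * (g * x * g⁻¹) * (h : G)⁻¹ := by group
    _ = (g * x * g⁻¹) * (h : G) * (h : G)⁻¹ := by rw [hc]
    _ = g * x * g⁻¹ := by group
end

section
/- Let S be a finite abelian p-group and W, W' ≤ Aut(S) two subgroups of order prime to p. If the semidirect products W ⋉ S and W' ⋉ S induce the same fusion on S — that is, for all subgroups P, Q ≤ S, the set of homomorphisms P → Q given by restriction of elements of W followed by inclusion equals the corresponding set for W' — then W = W'. -/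
theorem stmt_12 (p : ℕ) (hp : p.Prime) (S : Type) [CommGroup S] [Finite S]
    (hS : IsPGroup p S)
    (W W' : Subgroup (MulAut S))
    (hW : ¬ p ∣ Nat.card W) (hW' : ¬ p ∣ Nat.card W')
    (hfus : ∀ P Q : Subgroup S,
      {f : P → S | (∀ x : P, f x ∈ Q) ∧ ∃ w ∈ W, ∀ x : P, f x = w (x : S)} =
      {f : P → S | (∀ x : P, f x ∈ Q) ∧ ∃ w ∈ W', ∀ x : P, f x = w (x : S)}) :
    W = W' := by
  have key : ∀ (A B : Subgroup (MulAut S)),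
      ({f : (⊤ : Subgroup S) → S | (∀ x : (⊤ : Subgroup S), f x ∈ (⊤ : Subgroup S)) ∧
          ∃ w ∈ A, ∀ x : (⊤ : Subgroup S), f x = w (x : S)} =
        {f : (⊤ : Subgroup S) → S | (∀ x : (⊤ : Subgroup S), f x ∈ (⊤ : Subgroup S)) ∧
          ∃ w ∈ B, ∀ x : (⊤ : Subgroup S), f x = w (x : S)}) → A ≤ B := by
    intro A B h w hw
    have hmem : (fun x : (⊤ : Subgroup S) => w (x : S)) ∈
        {f : (⊤ : Subgroup S) → S | (∀ x : (⊤ : Subgroup S), f x ∈ (⊤ : Subgroup S)) ∧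
          ∃ u ∈ A, ∀ x : (⊤ : Subgroup S), f x = u (x : S)} :=
      ⟨fun _ => trivial, w, hw, fun _ => rfl⟩
    rw [h] at hmem
    obtain ⟨-, w', hw', hww'⟩ := hmem
    have : w = w' := by
      ext s
      exact hww' ⟨s, trivial⟩
    exact this ▸ hw'
  exact le_antisymm (key W W' (hfus ⊤ ⊤)) (key W' W (hfus ⊤ ⊤).symm)
end

section
/- Let G be a finite group, S a Sylow p-subgroup, and P ≤ S a subgroup that is fully normalized in F_S(G). Then P is fully centralized in F_S(G): |C_S(P)| ≥ |C_S(P')| for every P' ≤ S that is G-conjugate to P. -/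
open Subgroup Pointwise

lemma aux_card_conj_smul {G : Type} [Group G] (g : G) (H : Subgroup G) :
    Nat.card (MulAut.conj g • H : Subgroup G) = Nat.card H :=
  Nat.card_congr (equivSMul (MulAut.conj g) H).symm.toEquiv

lemma aux_centralizer_le_normalizer {G : Type} [Group G] (P : Subgroup G) :
    Subgroup.centralizer (P : Set G) ≤ Subgroup.normalizer (P : Set G) := by
  intro x hx
  rw [Subgroup.mem_normalizer_iff]
  intro h
  constructor
  · intro hh
    have h1 := hx h hh
    have h2 : x * h * x⁻¹ = h := by rw [← h1]; group
    rw [h2]; exact hh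
  · intro hh
    have h1 := hx _ hh
    have h2 : x * h = x * (x * h * x⁻¹) := by rw [← h1]; group
    have h3 : h = x * h * x⁻¹ := mul_left_cancel h2
    rw [h3]; exact hh

lemma aux_conj_centralizer {G : Type} [Group G] (g : G) (P : Subgroup G) :
    MulAut.conj g • Subgroup.centralizer (P : Set G) =
      Subgroup.centralizer ((MulAut.conj g • P : Subgroup G) : Set G) := by
  ext x
  rw [Subgroup.mem_pointwise_smul_iff_inv_smul_mem, Subgroup.mem_centralizer_iff,
    Subgroup.mem_centralizer_iff]
  constructor
  · intro hx h hh
    have hh' : (MulAut.conj g)⁻¹ • h ∈ P :=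
      (Subgroup.mem_pointwise_smul_iff_inv_smul_mem).mp hh
    have h1 := hx _ hh'
    simp only [MulAut.smul_def, MulAut.conj_inv_apply] at h1 ⊢
    have h2 := congrArg (fun z => g * z * g⁻¹) h1
    simpa [mul_assoc] using h2
  · intro hx k hk
    have hk' : MulAut.conj g • k ∈ ((MulAut.conj g • P : Subgroup G) : Set G) :=
      Subgroup.smul_mem_pointwise_smul _ _ _ hk
    have h1 := hx _ hk'
    simp only [MulAut.smul_def, MulAut.conj_apply, MulAut.conj_inv_apply] at h1 ⊢
    have h2 := congrArg (fun z => g⁻¹ * z * g) h1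
    simpa [mul_assoc] using h2

lemma aux_conj_normalizer {G : Type} [Group G] (g : G) (P : Subgroup G) :
    MulAut.conj g • Subgroup.normalizer (P : Set G) =
      Subgroup.normalizer ((MulAut.conj g • P : Subgroup G) : Set G) := by
  rw [Subgroup.pointwise_smul_def, Subgroup.pointwise_smul_def]
  exact P.map_equiv_normalizer_eq (MulAut.conj g)

theorem stmt_15 (p : ℕ) [Fact p.Prime] (G : Type) [Group G] [Finite G]
    (S : Sylow p G) (P : Subgroup G) (hP : P ≤ (S : Subgroup G))
    -- P is fully normalized in F_S(G):
    (hfn : ∀ g : G, P.map (MulAut.conj g).toMonoidHom ≤ (S : Subgroup G) →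
      Nat.card ((S : Subgroup G) ⊓ Subgroup.normalizer ((P.map (MulAut.conj g).toMonoidHom : Subgroup G) : Set G) : Subgroup G) ≤
        Nat.card ((S : Subgroup G) ⊓ Subgroup.normalizer (P : Set G) : Subgroup G)) :
    -- P is fully centralized in F_S(G):
    ∀ g : G, P.map (MulAut.conj g).toMonoidHom ≤ (S : Subgroup G) →
      Nat.card ((S : Subgroup G) ⊓
          Subgroup.centralizer ((P.map (MulAut.conj g).toMonoidHom : Subgroup G) : Set G) :
          Subgroup G) ≤
        Nat.card ((S : Subgroup G) ⊓ Subgroup.centralizer (P : Set G) : Subgroup G) := by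
  classical
  intro g hQle
  set N := Subgroup.normalizer (P : Set G) with hN
  set C := Subgroup.centralizer (P : Set G) with hC
  set T := (S : Subgroup G) ⊓ N with hT
  have hPp : IsPGroup p P := S.isPGroup'.to_le hP
  have hmapsmul : ∀ (k : G), P.map (MulAut.conj k).toMonoidHom = MulAut.conj k • P :=
    fun k => rfl
  -- Step 1: T has maximal cardinality among p-subgroups of N
  have step1 : ∀ W : Subgroup G, IsPGroup p W → W ≤ N → Nat.card W ≤ Nat.card T := by
    intro W hW hWN
    have hWP : IsPGroup p ((W ⊔ P : Subgroup G)) :=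
      IsPGroup.to_sup_of_normal_right' hW hPp hWN
    obtain ⟨V, hV⟩ := hWP.exists_le_sylow
    obtain ⟨k, hk⟩ := MulAction.exists_smul_eq G V S
    have hcoe : MulAut.conj k • (V : Subgroup G) = S := by
      rw [← Sylow.coe_subgroup_smul, hk]
    have hPV : P ≤ V := le_sup_right.trans hV
    have hWV : W ≤ (V : Subgroup G) := le_sup_left.trans hV
    have hQk : P.map (MulAut.conj k).toMonoidHom ≤ (S : Subgroup G) := by
      rw [hmapsmul, ← hcoe]
      exact Subgroup.pointwise_smul_le_pointwise_smul_iff.mpr hPV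
    have h1 := hfn k hQk
    have h2 : MulAut.conj k • W ≤
        (S : Subgroup G) ⊓ Subgroup.normalizer ((P.map (MulAut.conj k).toMonoidHom : Subgroup G) : Set G) := by
      rw [hmapsmul, ← aux_conj_normalizer, ← hcoe, ← Subgroup.smul_inf]
      exact Subgroup.pointwise_smul_le_pointwise_smul_iff.mpr (le_inf hWV hWN)
    calc Nat.card W = Nat.card (MulAut.conj k • W : Subgroup G) :=
          (aux_card_conj_smul k W).symm
      _ ≤ Nat.card ((S : Subgroup G) ⊓ Subgroup.normalizer ((P.map (MulAut.conj k).toMonoidHom : Subgroup G) : Set G) :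
            Subgroup G) := Subgroup.card_le_of_le h2
      _ ≤ Nat.card T := h1
  have hTp : IsPGroup p T := S.isPGroup'.to_le inf_le_left
  have hTN : T ≤ N := inf_le_right
  -- Step 2: T.subgroupOf N is a Sylow p-subgroup of N
  have hTn : IsPGroup p (T.subgroupOf N) :=
    hTp.of_equiv (Subgroup.subgroupOfEquivOfLe hTN).symm
  obtain ⟨U, hU⟩ := hTn.exists_le_sylow
  have hUcard : Nat.card ((U : Subgroup ↥N).map N.subtype) ≤ Nat.card T :=
    step1 _ (U.isPGroup'.map N.subtype) (Subgroup.map_subtype_le _)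
  have hcardU : Nat.card (U : Subgroup ↥N) = Nat.card ((U : Subgroup ↥N).map N.subtype) :=
    Nat.card_congr
      (Subgroup.equivMapOfInjective _ N.subtype (Subgroup.subtype_injective N)).toEquiv
  have hcardTn : Nat.card (T.subgroupOf N) = Nat.card T :=
    Nat.card_congr (Subgroup.subgroupOfEquivOfLe hTN).toEquiv
  have hUeq : T.subgroupOf N = U :=
    Subgroup.eq_of_le_of_card_ge hU (by rw [hcardTn]; exact hcardU.trans_le hUcard)
  -- Step 3
  set Q := P.map (MulAut.conj g).toMonoidHom with hQdef
  set R := (S : Subgroup G) ⊓ Subgroup.centralizer (Q : Set G) with hRdef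
  set R' := MulAut.conj g⁻¹ • R with hR'def
  have hRp : IsPGroup p R := S.isPGroup'.to_le inf_le_left
  have hR'p : IsPGroup p R' := hRp.of_equiv (Subgroup.equivSMul (MulAut.conj g⁻¹) R)
  have hinvQ : MulAut.conj g⁻¹ • Q = P := by
    rw [hQdef, hmapsmul, ← mul_smul, ← map_mul, inv_mul_cancel, map_one, one_smul]
  have hR'C : R' ≤ C := by
    rw [hR'def]
    calc MulAut.conj g⁻¹ • R ≤ MulAut.conj g⁻¹ • Subgroup.centralizer (Q : Set G) :=
          Subgroup.pointwise_smul_le_pointwise_smul_iff.mpr inf_le_right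
      _ = C := by rw [aux_conj_centralizer, hinvQ]
  have hCN : C ≤ N := aux_centralizer_le_normalizer P
  have hR'N : R' ≤ N := hR'C.trans hCN
  have hcardR' : Nat.card R' = Nat.card R := aux_card_conj_smul g⁻¹ R
  -- conjugate R' into T inside N
  have hR'n : IsPGroup p (R'.subgroupOf N) :=
    hR'p.of_equiv (Subgroup.subgroupOfEquivOfLe hR'N).symm
  obtain ⟨U2, hU2⟩ := hR'n.exists_le_sylow
  obtain ⟨n, hn⟩ := MulAction.exists_smul_eq (↥N) U2 U
  have hncoe : MulAut.conj n • (U2 : Subgroup ↥N) = (U : Subgroup ↥N) := by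
    rw [← Sylow.coe_subgroup_smul, hn]
  have hsub : (MulAut.conj (↑n : G) • R').subgroupOf N ≤ T.subgroupOf N := by
    rw [← Subgroup.conj_smul_subgroupOf hR'N n, hUeq, ← hncoe]
    exact Subgroup.pointwise_smul_le_pointwise_smul_iff.mpr hU2
  have hsmulN : MulAut.conj (↑n : G) • R' ≤ N := Subgroup.conj_smul_le_of_le hR'N n
  have hR''T : MulAut.conj (↑n : G) • R' ≤ T := by
    intro x hx
    have hmem := hsub (by rwa [Subgroup.mem_subgroupOf] : (⟨x, hsmulN hx⟩ : ↥N) ∈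
      (MulAut.conj (↑n : G) • R').subgroupOf N)
    rwa [Subgroup.mem_subgroupOf] at hmem
  have hnP : MulAut.conj (↑n : G) • P = P := by
    ext x
    rw [Subgroup.mem_pointwise_smul_iff_inv_smul_mem]
    simp only [MulAut.smul_def, MulAut.conj_inv_apply]
    have h1 := (Subgroup.mem_normalizer_iff.mp n.2 ((↑n)⁻¹ * x * ↑n)).symm
    constructor
    · intro hmem
      have := h1.mpr hmem
      simpa [mul_assoc] using this
    · intro hmem
      apply h1.mp
      have : (↑n : G) * ((↑n)⁻¹ * x * ↑n) * (↑n)⁻¹ = x := by group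
      rwa [this]
  have hR''C : MulAut.conj (↑n : G) • R' ≤ C := by
    calc MulAut.conj (↑n : G) • R' ≤ MulAut.conj (↑n : G) • C :=
          Subgroup.pointwise_smul_le_pointwise_smul_iff.mpr hR'C
      _ = C := by rw [hC, aux_conj_centralizer, hnP]
  have hTC : T ⊓ C = (S : Subgroup G) ⊓ C := by
    rw [hT, inf_assoc, inf_eq_right.mpr hCN]
  calc Nat.card R = Nat.card R' := hcardR'.symm
    _ = Nat.card (MulAut.conj (↑n : G) • R' : Subgroup G) :=
        (aux_card_conj_smul (↑n : G) R').symm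
    _ ≤ Nat.card (T ⊓ C : Subgroup G) := Subgroup.card_le_of_le (le_inf hR''T hR''C)
    _ = Nat.card ((S : Subgroup G) ⊓ C : Subgroup G) := by rw [hTC]
end
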